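/- arXiv:1904.04152 — 3 statements merged into one kernel-verified Lean document; each statement's English description precedes it below -/
import Mathlib

section
/- With the setup of the telescoping identity (finite S, A; deterministic model f; V⋆(s) = min_a Q⋆(s,a); modified stage cost L̂(s,a) = Q⋆(s,a) − γ V⋆(f(s,a))), the optimal N-step value V̂_N(s) := min over policies π of [γ^N V⋆(x_N^π) + Σ_{k=0}^{N−1} γ^k L̂(x_k^π, π(x_k^π))] equals V⋆(s) for every state s and every horizon N ≥ 1. -/
def traj {S A : Type} (f : S → A → S) (π : S → A) (s : S) : ℕ → S
  | 0 => s
  | n + 1 => f (traj f π s n) (π (traj f π s n))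

theorem optimal_N_step_value_eq_Vstar
    {S A : Type} [Fintype S] [Fintype A] [Nonempty S] [Nonempty A]
    (f : S → A → S) (V : S → ℝ) (Q : S → A → ℝ)
    (hV : ∀ s, V s = ⨅ a, Q s a)
    (γ : ℝ) (hγ : 0 < γ) (hγ1 : γ ≤ 1)
    (Lhat : S → A → ℝ) (hL : ∀ s a, Lhat s a = Q s a - γ * V (f s a))
    (N : ℕ) (hN : 1 ≤ N) (s : S) :
    (⨅ π : S → A,
      (γ ^ N * V (traj f π s N)
        + ∑ k ∈ Finset.range N, γ ^ k * Lhat (traj f π s k) (π (traj f π s k))))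
    = V s := by
  -- V is pointwise ≤ Q
  have hVle : ∀ t a, V t ≤ Q t a := by
    intro t a
    rw [hV]
    exact ciInf_le (Finite.bddBelow_range _) a
  -- telescoping identity
  have key : ∀ π : S → A,
      γ ^ N * V (traj f π s N)
        + ∑ k ∈ Finset.range N, γ ^ k * Lhat (traj f π s k) (π (traj f π s k))
      = V s + ∑ k ∈ Finset.range N,
          γ ^ k * (Q (traj f π s k) (π (traj f π s k)) - V (traj f π s k)) := by
    intro π
    have tel := Finset.sum_range_sub (fun k => γ ^ k * V (traj f π s k)) N
    have h1 : ∀ k, γ ^ k * Lhat (traj f π s k) (π (traj f π s k))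
        = γ ^ k * (Q (traj f π s k) (π (traj f π s k)) - V (traj f π s k))
          - (γ ^ (k + 1) * V (traj f π s (k + 1)) - γ ^ k * V (traj f π s k)) := by
      intro k
      rw [hL]
      show _ = _ - (_ * V (traj f π s (k+1)) - _)
      rw [show traj f π s (k+1) = f (traj f π s k) (π (traj f π s k)) from rfl]
      ring
    rw [Finset.sum_congr rfl (fun k _ => h1 k), Finset.sum_sub_distrib, tel]
    simp [traj]
    ring
  -- each value ≥ V s
  have hge : ∀ π : S → A,
      V s ≤ γ ^ N * V (traj f π s N)
        + ∑ k ∈ Finset.range N, γ ^ k * Lhat (traj f π s k) (π (traj f π s k)) := by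
    intro π
    rw [key π]
    have : 0 ≤ ∑ k ∈ Finset.range N,
        γ ^ k * (Q (traj f π s k) (π (traj f π s k)) - V (traj f π s k)) := by
      apply Finset.sum_nonneg
      intro k _
      have := hVle (traj f π s k) (π (traj f π s k))
      have h2 : (0:ℝ) ≤ γ ^ k := pow_nonneg hγ.le k
      nlinarith
    linarith
  -- an optimal policy
  have hopt : ∃ π0 : S → A, ∀ t, Q t (π0 t) = V t := by
    have : ∀ t, ∃ a, ∀ b, Q t a ≤ Q t b := fun t => Finite.exists_min (Q t)
    choose π0 hπ0 using this
    refine ⟨π0, fun t => le_antisymm ?_ (hVle t _)⟩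
    rw [hV]
    exact le_ciInf (hπ0 t)
  obtain ⟨π0, hπ0⟩ := hopt
  apply le_antisymm
  · have := key π0
    calc (⨅ π : S → A, _) ≤ _ := ciInf_le (Finite.bddBelow_range _) π0
      _ = V s := by rw [key π0]; simp [hπ0]
  · exact le_ciInf hge
end

section
/- With the setup of the N-step modified-cost problem (finite S, A; deterministic model f; L̂(s,a) = Q⋆(s,a) − γ V⋆(f(s,a)); V⋆(s)=min_a Q⋆(s,a)), define Q̂_N(s,a) := L̂(s,a) + γ V̂_{N−1}(f(s,a)) where V̂_{N−1} is the optimal (N−1)-step modified value with terminal cost V⋆. Then Q̂_N(s,a) = Q⋆(s,a) for all (s,a) and all N ≥ 1. -/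
theorem Qhat_eq_Qstar
    {S A : Type} [Fintype S] [Fintype A] [Nonempty S] [Nonempty A]
    (f : S → A → S) (V : S → ℝ) (Q : S → A → ℝ)
    (hV : ∀ s, V s = ⨅ a, Q s a)
    (γ : ℝ) (hγ : 0 < γ) (hγ1 : γ ≤ 1)
    (Lhat : S → A → ℝ) (hL : ∀ s a, Lhat s a = Q s a - γ * V (f s a))
    (Vhat : ℕ → S → ℝ)
    (hV0 : ∀ s, Vhat 0 s = V s)
    (hVm : ∀ m, 1 ≤ m → ∀ s, Vhat m s =
      ⨅ π : S → A,
        (γ ^ m * V (traj f π s m)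
          + ∑ k ∈ Finset.range m, γ ^ k * Lhat (traj f π s k) (π (traj f π s k))))
    (N : ℕ) (hN : 1 ≤ N) (s : S) (a : A) :
    Lhat s a + γ * Vhat (N - 1) (f s a) = Q s a := by
  -- V s ≤ Q s a for all a
  have hVle : ∀ s a, V s ≤ Q s a := by
    intro s a
    rw [hV s]
    exact ciInf_le (Finite.bddBelow_range _) a
  -- existence of a greedy policy
  have hgreedy : ∃ π : S → A, ∀ s, Q s (π s) = V s := by
    have : ∀ s : S, ∃ a, ∀ b, Q s a ≤ Q s b := by
      intro s
      obtain ⟨a, _, ha⟩ := Finset.exists_min_image Finset.univ (Q s) ⟨Classical.arbitrary A, Finset.mem_univ _⟩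
      exact ⟨a, fun b => ha b (Finset.mem_univ b)⟩
    choose π hπ using this
    refine ⟨π, fun s => le_antisymm ?_ (hVle s (π s))⟩
    rw [hV s]
    exact le_ciInf (hπ s)
  obtain ⟨πg, hπg⟩ := hgreedy
  -- key: Vhat m = V for all m
  have key : ∀ m s, Vhat m s = V s := by
    intro m s
    rcases Nat.eq_zero_or_pos m with hm | hm
    · rw [hm, hV0]
    · rw [hVm m hm s]
      apply le_antisymm
      · -- use greedy policy
        refine le_trans (ciInf_le (Finite.bddBelow_range _) πg) (le_of_eq ?_)
        have step : ∀ k, γ ^ k * Lhat (traj f πg s k) (πg (traj f πg s k))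
            = γ ^ k * V (traj f πg s k) - γ ^ (k + 1) * V (traj f πg s (k + 1)) := by
          intro k
          rw [hL]
          have : f (traj f πg s k) (πg (traj f πg s k)) = traj f πg s (k + 1) := rfl
          rw [this]
          have hq : Q (traj f πg s k) (πg (traj f πg s k)) = V (traj f πg s k) := hπg _
          rw [hq]; ring
        rw [Finset.sum_congr rfl (fun k _ => step k)]
        have htel : ∑ k ∈ Finset.range m,
            (γ ^ k * V (traj f πg s k) - γ ^ (k + 1) * V (traj f πg s (k + 1)))
            = γ ^ 0 * V (traj f πg s 0) - γ ^ m * V (traj f πg s m) := by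
          have := Finset.sum_range_sub' (fun k => γ ^ k * V (traj f πg s k)) m
          simpa using this
        rw [htel]
        simp [traj]
      · -- lower bound for every policy
        refine le_ciInf fun π => ?_
        have step : ∀ k, γ ^ k * V (traj f π s k) - γ ^ (k + 1) * V (traj f π s (k + 1))
            ≤ γ ^ k * Lhat (traj f π s k) (π (traj f π s k)) := by
          intro k
          rw [hL]
          have : f (traj f π s k) (π (traj f π s k)) = traj f π s (k + 1) := rfl
          rw [this]
          have := hVle (traj f π s k) (π (traj f π s k))
          have hγk : (0:ℝ) ≤ γ ^ k := le_of_lt (pow_pos hγ k)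
          have := mul_le_mul_of_nonneg_left this hγk
          rw [pow_succ]
          nlinarith
        have hsum : ∑ k ∈ Finset.range m,
            (γ ^ k * V (traj f π s k) - γ ^ (k + 1) * V (traj f π s (k + 1)))
            ≤ ∑ k ∈ Finset.range m, γ ^ k * Lhat (traj f π s k) (π (traj f π s k)) :=
          Finset.sum_le_sum fun k _ => step k
        have htel : ∑ k ∈ Finset.range m,
            (γ ^ k * V (traj f π s k) - γ ^ (k + 1) * V (traj f π s (k + 1)))
            = γ ^ 0 * V (traj f π s 0) - γ ^ m * V (traj f π s m) := by
          have := Finset.sum_range_sub' (fun k => γ ^ k * V (traj f π s k)) m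
          simpa using this
        rw [htel] at hsum
        simp only [pow_zero, one_mul] at hsum
        have : V (traj f π s 0) = V s := rfl
        linarith [hsum]
  rw [key, hL]
  ring
end

section
/- Let S, A be finite nonempty sets, f : S × A → S a deterministic model, γ ∈ (0,1], L̂ : S × A → ℝ a stage cost, and π̂ : S → A its one-step-optimal (greedy) policy in the sense that for all s, the modified problem's value is attained at π̂. Consider a cost modification Λ : S × A → ℝ satisfying Λ(s,a) ≥ Λ(s, π̂(s)) for all s, a, and define L̄(s,a) = L̂(s,a) + Λ(s,a) − γ Λ(f(s,a), π̂(f(s,a))). If Q̂ : S × A → ℝ and V̂ : S → ℝ satisfy the Bellman relations Q̂(s,a) = L̂(s,a) + γ V̂(f(s,a)), V̂(s) = Q̂(s, π̂(s)) = min_a Q̂(s,a), then Q̄(s,a) := Q̂(s,a) + Λ(s,a) and V̄(s) := V̂(s) + Λ(s, π̂(s)) satisfy Q̄(s,a) = L̄(s,a) + γ V̄(f(s,a)) and V̄(s) = min_a Q̄(s,a) = Q̄(s, π̂(s)) for all s, a. In particular, π̂ is also greedy for Q̄. -/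
theorem generalized_cost_rotation_preserves_policy
    {S A : Type} [Fintype S] [Fintype A] [Nonempty S] [Nonempty A]
    (f : S → A → S) (γ : ℝ) (hγ : 0 < γ) (hγ1 : γ ≤ 1)
    (Lhat : S → A → ℝ) (πhat : S → A)
    (Λ : S → A → ℝ) (hΛ : ∀ s a, Λ s (πhat s) ≤ Λ s a)
    (Lbar : S → A → ℝ)
    (hLbar : ∀ s a, Lbar s a = Lhat s a + Λ s a - γ * Λ (f s a) (πhat (f s a)))
    (Qhat : S → A → ℝ) (Vhat : S → ℝ)
    (hBellmanQ : ∀ s a, Qhat s a = Lhat s a + γ * Vhat (f s a))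
    (hBellmanV : ∀ s, Vhat s = Qhat s (πhat s))
    (hGreedy : ∀ s, Vhat s = ⨅ a, Qhat s a)
    (Qbar : S → A → ℝ) (Vbar : S → ℝ)
    (hQbar : ∀ s a, Qbar s a = Qhat s a + Λ s a)
    (hVbar : ∀ s, Vbar s = Vhat s + Λ s (πhat s)) :
    (∀ s a, Qbar s a = Lbar s a + γ * Vbar (f s a)) ∧
    (∀ s, Vbar s = ⨅ a, Qbar s a) ∧
    (∀ s, Vbar s = Qbar s (πhat s)) := by
  have hlow : ∀ s a, Qbar s (πhat s) ≤ Qbar s a := by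
    intro s a
    rw [hQbar, hQbar, ← hBellmanV]
    have h1 : Vhat s ≤ Qhat s a := by
      rw [hGreedy]
      exact ciInf_le (Set.Finite.bddBelow (Set.finite_range _)) a
    exact add_le_add h1 (hΛ s a)
  have hmin : ∀ s, Vbar s = Qbar s (πhat s) := by
    intro s
    rw [hVbar, hQbar, hBellmanV]
  refine ⟨?_, ?_, hmin⟩
  · intro s a
    rw [hQbar, hLbar, hVbar, hBellmanQ]
    ring
  · intro s
    rw [hmin]
    exact le_antisymm (le_ciInf (hlow s))
      (ciInf_le (Set.Finite.bddBelow (Set.finite_range _)) (πhat s))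
end
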